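/- For fixed ρ ≥ 0, the function g(ρ, z) = ((1/2)(1+z)^(1/(1+ρ)) + (1/2)(1-z)^(1/(1+ρ)))^(1+ρ) is non-increasing in z on [0,1]. -/

import Mathlib

open Real Set

noncomputable def g (ρ z : ℝ) : ℝ :=
  ((1/2) * (1 + z) ^ (1/(1+ρ)) + (1/2) * (1 - z) ^ (1/(1+ρ))) ^ (1+ρ)

theorem g_antitone (ρ : ℝ) (hρ : 0 ≤ ρ) :
    AntitoneOn (fun z => g ρ z) (Set.Icc (0:ℝ) 1) := by
  have hρ1 : (0:ℝ) < 1 + ρ := by linarith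
  set p : ℝ := 1/(1+ρ) with hp
  have hp0 : 0 < p := by positivity
  have hp1 : p ≤ 1 := by
    rw [hp, div_le_one hρ1]; linarith
  set h : ℝ → ℝ := fun z => (1/2) * (1 + z) ^ p + (1/2) * (1 - z) ^ p with hh
  -- h is antitone on [0,1]
  have hderiv : ∀ z ∈ Icc (0:ℝ) 1 \ {1},
      HasDerivAt h ((1/2) * (p * (1 + z) ^ (p - 1)) - (1/2) * (p * (1 - z) ^ (p - 1))) z := by
    intro z hz
    obtain ⟨⟨hz0, hz1⟩, hz1'⟩ := hz
    have hz1lt : z < 1 := lt_of_le_of_ne hz1 (by simpa using hz1')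
    have h1 : HasDerivAt (fun z : ℝ => (1 + z) ^ p) (p * (1 + z) ^ (p - 1) * 1) z := by
      have := (Real.hasDerivAt_rpow_const (x := 1 + z) (p := p)
        (Or.inl (by positivity))).comp z ((hasDerivAt_const z 1).add (hasDerivAt_id z))
      simpa [Function.comp_def] using this
    have h2 : HasDerivAt (fun z : ℝ => (1 - z) ^ p) (p * (1 - z) ^ (p - 1) * (-1)) z := by
      have := (Real.hasDerivAt_rpow_const (x := 1 - z) (p := p)
        (Or.inl (by intro h'; nlinarith))).comp z ((hasDerivAt_const z 1).sub (hasDerivAt_id z))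
      simpa [Function.comp_def] using this
    have := ((h1.const_mul (1/2)).add (h2.const_mul (1/2)))
    refine this.congr_deriv ?_
    ring
  have hanti : AntitoneOn h (Icc (0:ℝ) 1) := by
    apply antitoneOn_of_deriv_nonpos (convex_Icc 0 1)
    · apply Continuous.continuousOn
      apply Continuous.add
      · exact (continuous_const.mul ((continuous_const.add continuous_id).rpow_const
          (fun x => Or.inr hp0.le)))
      · exact (continuous_const.mul ((continuous_const.sub continuous_id).rpow_const
          (fun x => Or.inr hp0.le)))
    · intro z hz
      rw [interior_Icc] at hz
      exact ((hderiv z ⟨⟨hz.1.le, hz.2.le⟩, by simp [ne_of_lt hz.2]⟩)).differentiableAt.differentiableWithinAt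
    · intro z hz
      rw [interior_Icc] at hz
      rw [(hderiv z ⟨⟨hz.1.le, hz.2.le⟩, by simp [ne_of_lt hz.2]⟩).deriv]
      have hb : (0:ℝ) < 1 - z := by linarith [hz.2]
      have hcmp : (1 + z) ^ (p - 1) ≤ (1 - z) ^ (p - 1) :=
        Real.rpow_le_rpow_of_nonpos hb (by linarith [hz.1]) (by linarith)
      nlinarith [hp0]
  intro a ha b hb hab
  have h1 : h b ≤ h a := hanti ha hb hab
  have h2 : 0 ≤ h b := by
    have : (0:ℝ) ≤ 1 - b := by linarith [hb.2]
    have : (0:ℝ) ≤ 1 + b := by linarith [hb.1]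
    positivity
  simpa [g, hh, hp] using Real.rpow_le_rpow h2 h1 hρ1.le
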